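/- Let t ∈ [0,1] and let f₀, f₁, g : ℝⁿ → ℝ ∪ {+∞} be Borel functions such that g((1−t)x₀ + t x₁) ≤ (1−t) f₀(x₀) + t f₁(x₁) for all x₀, x₁ ∈ ℝⁿ. Then ∫ e^{−g} dx ≥ (∫ e^{−f₀} dx)^{1−t} (∫ e^{−f₁} dx)^{t}. -/

import Mathlib

open MeasureTheory ENNReal

noncomputable def expNeg (y : EReal) : ℝ≥0∞ :=
  if y = ⊤ then 0 else ENNReal.ofReal (Real.exp (-y.toReal))


open MeasureTheory Set Filter
open scoped ENNReal NNReal Pointwise Topology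

namespace PL


/-- Weighted AM-GM in `ℝ≥0∞`. -/
lemma geom_le_arith {t : ℝ} (ht0 : 0 < t) (ht1 : t < 1) (a b : ℝ≥0∞) :
    a ^ (1 - t) * b ^ t ≤ ENNReal.ofReal (1 - t) * a + ENNReal.ofReal t * b := by
  have h1t : (0:ℝ) < 1 - t := by linarith
  rcases eq_or_ne a ⊤ with rfl | ha
  · have : ENNReal.ofReal (1 - t) * ⊤ = ⊤ :=
      ENNReal.mul_top (by simp [ENNReal.ofReal_eq_zero]; linarith)
    simp [this]
  rcases eq_or_ne b ⊤ with rfl | hb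
  · have : ENNReal.ofReal t * ⊤ = ⊤ :=
      ENNReal.mul_top (by simp [ENNReal.ofReal_eq_zero]; linarith)
    simp [this]
  lift a to ℝ≥0 using ha
  lift b to ℝ≥0 using hb
  have key := NNReal.geom_mean_le_arith_mean2_weighted
    (w₁ := Real.toNNReal (1 - t)) (w₂ := Real.toNNReal t) (p₁ := a) (p₂ := b) ?_
  · calc (a:ℝ≥0∞) ^ (1-t) * (b:ℝ≥0∞) ^ t
        = ((a ^ (1-t) * b ^ t : ℝ≥0) : ℝ≥0∞) := by
          rw [ENNReal.coe_mul, ← ENNReal.coe_rpow_of_nonneg a h1t.le,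
            ← ENNReal.coe_rpow_of_nonneg b ht0.le]
      _ ≤ ((Real.toNNReal (1-t) * a + Real.toNNReal t * b : ℝ≥0) : ℝ≥0∞) := by
          apply ENNReal.coe_le_coe.2
          convert key using 3 <;> simp [Real.coe_toNNReal, h1t.le, ht0.le]
      _ = ENNReal.ofReal (1 - t) * a + ENNReal.ofReal t * b := by
          simp [ENNReal.ofReal, ENNReal.coe_mul]
  · have : Real.toNNReal (1 - t) + Real.toNNReal t = Real.toNNReal 1 := by
      rw [← Real.toNNReal_add (by linarith) ht0.le]; norm_num
    simpa using this

/-- One-dimensional Brunn–Minkowski for compact sets. -/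
lemma bm_compact {K₁ K₂ : Set ℝ} (h₁ : IsCompact K₁) (h₂ : IsCompact K₂)
    (ne₁ : K₁.Nonempty) (ne₂ : K₂.Nonempty) :
    volume K₁ + volume K₂ ≤ volume (K₁ + K₂) := by
  set a := sSup K₁ with ha
  set b := sInf K₂ with hb
  have haK : a ∈ K₁ := h₁.sSup_mem ne₁
  have hbK : b ∈ K₂ := h₂.sInf_mem ne₂
  set U : Set ℝ := (· + b) '' K₁ with hU
  set V : Set ℝ := (a + ·) '' K₂ with hV
  have hUsub : U ⊆ K₁ + K₂ := by
    rintro _ ⟨x, hx, rfl⟩; exact add_mem_add hx hbK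
  have hVsub : V ⊆ K₁ + K₂ := by
    rintro _ ⟨y, hy, rfl⟩; exact add_mem_add haK hy
  have hUle : ∀ z ∈ U, z ≤ a + b := by
    rintro _ ⟨x, hx, rfl⟩
    exact add_le_add_left (le_csSup h₁.bddAbove hx) b
  have hVge : ∀ z ∈ V, a + b ≤ z := by
    rintro _ ⟨y, hy, rfl⟩
    exact add_le_add_right (csInf_le h₂.bddBelow hy) a
  have hVmeas : MeasurableSet V := (h₂.image (continuous_add_left a)).measurableSet
  have hUV : volume (U ∩ V) = 0 := by
    have : U ∩ V ⊆ {a + b} := by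
      rintro z ⟨hzU, hzV⟩
      exact le_antisymm (hUle z hzU) (hVge z hzV) ▸ rfl
    exact measure_mono_null this (measure_singleton _)
  have hvolU : volume U = volume K₁ := by
    rw [hU, Set.image_add_right]
    exact measure_preimage_add_right volume (-b) K₁
  have hvolV : volume V = volume K₂ := by
    rw [hV, Set.image_add_left]
    exact measure_preimage_add volume (-a) K₂
  calc volume K₁ + volume K₂ = volume U + volume V := by rw [hvolU, hvolV]
    _ = volume (U ∪ V) + volume (U ∩ V) := (measure_union_add_inter U hVmeas).symm
    _ = volume (U ∪ V) := by rw [hUV, add_zero]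
    _ ≤ volume (K₁ + K₂) := measure_mono (union_subset hUsub hVsub)
/-- Translate a subset of one factor into the sum-superset. -/
lemma measure_le_of_translate {A B S : Set ℝ} (hsub : A + B ⊆ S) {a : ℝ} (ha : a ∈ A)
    {K : Set ℝ} (hK : K ⊆ B) : volume K ≤ volume S := by
  have h1 : (a + ·) '' K ⊆ S := by
    rintro _ ⟨y, hy, rfl⟩; exact hsub (add_mem_add ha (hK hy))
  have h2 : volume ((a + ·) '' K) = volume K := by
    rw [Set.image_add_left]; exact measure_preimage_add volume (-a) K
  rw [← h2]; exact measure_mono h1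

lemma measure_le_of_translate' {A B S : Set ℝ} (hsub : A + B ⊆ S) {b : ℝ} (hb : b ∈ B)
    {K : Set ℝ} (hK : K ⊆ A) : volume K ≤ volume S := by
  have h1 : (· + b) '' K ⊆ S := by
    rintro _ ⟨x, hx, rfl⟩; exact hsub (add_mem_add (hK hx) hb)
  have h2 : volume ((· + b) '' K) = volume K := by
    rw [Set.image_add_right]; exact measure_preimage_add_right volume (-b) K
  rw [← h2]; exact measure_mono h1

/-- One-dimensional Brunn–Minkowski, measurable version with superset. -/
lemma bm_meas {A B S : Set ℝ} (hA : MeasurableSet A) (hB : MeasurableSet B)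
    (neA : A.Nonempty) (neB : B.Nonempty) (hsub : A + B ⊆ S) :
    volume A + volume B ≤ volume S := by
  obtain ⟨a, ha⟩ := neA
  obtain ⟨b, hb⟩ := neB
  -- key estimate for compact subsets
  have key : ∀ K₁ ⊆ A, ∀ K₂ ⊆ B, IsCompact K₁ → IsCompact K₂ →
      volume K₁ + volume K₂ ≤ volume S := by
    intro K₁ hK₁ K₂ hK₂ hc₁ hc₂
    rcases K₁.eq_empty_or_nonempty with rfl | hne₁
    · simpa using measure_le_of_translate hsub ha hK₂
    rcases K₂.eq_empty_or_nonempty with rfl | hne₂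
    · simpa using measure_le_of_translate' hsub hb hK₁
    refine (bm_compact hc₁ hc₂ hne₁ hne₂).trans (measure_mono ?_)
    exact (Set.add_subset_add hK₁ hK₂).trans hsub
  rcases eq_or_ne (volume A) ⊤ with hAtop | hAtop
  · have : volume S = ⊤ :=
      top_le_iff.1 (hAtop ▸ measure_le_of_translate' hsub hb subset_rfl)
    simp [this]
  rcases eq_or_ne (volume B) ⊤ with hBtop | hBtop
  · have : volume S = ⊤ :=
      top_le_iff.1 (hBtop ▸ measure_le_of_translate hsub ha subset_rfl)
    simp [this]
  refine ENNReal.le_of_forall_pos_le_add fun ε hε _ => ?_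
  have hε2 : ((ε : ℝ≥0∞) / 2) ≠ 0 := by
    simp [ENNReal.div_eq_zero_iff]; exact_mod_cast hε.ne'
  obtain ⟨K₁, hK₁sub, hK₁c, hK₁⟩ := hA.exists_isCompact_lt_add hAtop hε2
  obtain ⟨K₂, hK₂sub, hK₂c, hK₂⟩ := hB.exists_isCompact_lt_add hBtop hε2
  calc volume A + volume B ≤ (volume K₁ + ε/2) + (volume K₂ + ε/2) :=
        add_le_add hK₁.le hK₂.le
    _ = (volume K₁ + volume K₂) + (ε/2 + ε/2) := by ring
    _ ≤ volume S + ε := by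
        rw [ENNReal.add_halves]
        exact add_le_add_left (key K₁ hK₁sub K₂ hK₂sub hK₁c hK₂c) _

/-- Layer-cake formula for a measurable function bounded by 1. -/
lemma layercake {φ : ℝ → ℝ≥0∞} (hm : Measurable φ) (hb : ∀ x, φ x ≤ 1) :
    ∫⁻ x, φ x = ∫⁻ s in Ioo (0:ℝ) 1, volume {x | ENNReal.ofReal s < φ x} := by
  have hne : ∀ x, φ x ≠ ⊤ := fun x => (lt_of_le_of_lt (hb x) (by norm_num)).ne
  have h1 : ∫⁻ x, φ x = ∫⁻ x, ENNReal.ofReal ((φ x).toReal) := by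
    congr 1; ext x; rw [ENNReal.ofReal_toReal (hne x)]
  rw [h1, lintegral_eq_lintegral_meas_lt volume
    (Eventually.of_forall fun x => ENNReal.toReal_nonneg)
    (hm.ennreal_toReal.aemeasurable)]
  rw [← Ioo_union_Ici_eq_Ioi (zero_lt_one (α := ℝ)),
    lintegral_union measurableSet_Ici
      (Set.disjoint_left.mpr fun x hx hx' => absurd hx.2 (not_lt.2 hx'))]
  have hzero : ∫⁻ s in Ici (1:ℝ), volume {a | s < (φ a).toReal} = 0 := by
    rw [setLIntegral_congr_fun measurableSet_Ici
      (fun s hs => ?_), lintegral_zero]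
    have : {a : ℝ | s < (φ a).toReal} = ∅ := by
      ext a
      simp only [mem_setOf_eq, mem_empty_iff_false, iff_false, not_lt]
      calc (φ a).toReal ≤ (1:ℝ≥0∞).toReal :=
            ENNReal.toReal_mono (by norm_num) (hb a)
        _ = 1 := by simp
        _ ≤ s := hs
    rw [this]; simp
  rw [hzero, add_zero]
  refine setLIntegral_congr_fun measurableSet_Ioo (fun s hs => ?_)
  congr 1; ext a
  simp only [mem_setOf_eq]
  rw [ENNReal.ofReal_lt_iff_lt_toReal hs.1.le (hne a)]
/-- Normalized one-dimensional Prékopa–Leindler. -/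
lemma pl_one_norm {t : ℝ} (ht0 : 0 < t) (ht1 : t < 1) {φ₀ φ₁ ψ : ℝ → ℝ≥0∞}
    (hm₀ : Measurable φ₀) (hm₁ : Measurable φ₁) (hmψ : Measurable ψ)
    (hb₀ : ∀ x, φ₀ x ≤ 1) (hb₁ : ∀ x, φ₁ x ≤ 1)
    (hs₀ : ∀ s : ℝ≥0∞, s < 1 → ∃ x, s < φ₀ x)
    (hs₁ : ∀ s : ℝ≥0∞, s < 1 → ∃ x, s < φ₁ x)
    (h : ∀ x₀ x₁ : ℝ, φ₀ x₀ ^ (1 - t) * φ₁ x₁ ^ t ≤ ψ ((1 - t) • x₀ + t • x₁)) :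
    (∫⁻ x, φ₀ x) ^ (1 - t) * (∫⁻ x, φ₁ x) ^ t ≤ ∫⁻ x, ψ x := by
  have h1t : (0:ℝ) < 1 - t := by linarith
  set ψ' : ℝ → ℝ≥0∞ := fun x => min (ψ x) 1 with hψ'
  have hmψ' : Measurable ψ' := hmψ.min measurable_const
  have hbψ' : ∀ x, ψ' x ≤ 1 := fun x => min_le_right _ _
  -- level set inclusion
  have key : ∀ s ∈ Ioo (0:ℝ) 1,
      ENNReal.ofReal (1 - t) * volume {x | ENNReal.ofReal s < φ₀ x}
        + ENNReal.ofReal t * volume {x | ENNReal.ofReal s < φ₁ x}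
      ≤ volume {x | ENNReal.ofReal s < ψ' x} := by
    intro s hs
    set c : ℝ≥0∞ := ENNReal.ofReal s with hc
    have hc0 : c ≠ 0 := by simp [hc, ENNReal.ofReal_eq_zero]; linarith [hs.1]
    have hctop : c ≠ ⊤ := ENNReal.ofReal_ne_top
    have hc1 : c < 1 := ENNReal.ofReal_lt_one.2 hs.2
    set A₀ : Set ℝ := {x | c < φ₀ x} with hA₀
    set A₁ : Set ℝ := {x | c < φ₁ x} with hA₁
    have hmA₀ : MeasurableSet A₀ := hm₀ measurableSet_Ioi
    have hmA₁ : MeasurableSet A₁ := hm₁ measurableSet_Ioi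
    have hneA₀ : A₀.Nonempty := hs₀ c hc1
    have hneA₁ : A₁.Nonempty := hs₁ c hc1
    have hsub : (1 - t) • A₀ + t • A₁ ⊆ {x | c < ψ' x} := by
      rintro _ ⟨_, ⟨x₀, hx₀, rfl⟩, _, ⟨x₁, hx₁, rfl⟩, rfl⟩
      have hlt : c < φ₀ x₀ ^ (1 - t) * φ₁ x₁ ^ t := by
        have : c = c ^ (1 - t) * c ^ t := by
          rw [← ENNReal.rpow_add _ _ hc0 hctop]; norm_num
        rw [this]
        exact ENNReal.mul_lt_mul (ENNReal.rpow_lt_rpow hx₀ h1t)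
          (ENNReal.rpow_lt_rpow hx₁ ht0)
      have hlt2 : c < ψ ((1 - t) • x₀ + t • x₁) := hlt.trans_le (h x₀ x₁)
      simp only [mem_setOf_eq, hψ', lt_min_iff]
      exact ⟨hlt2, hc1⟩
    have hvol₀ : volume ((1 - t) • A₀) = ENNReal.ofReal (1 - t) * volume A₀ := by
      have := Measure.addHaar_smul (volume : Measure ℝ) (1 - t) A₀
      simpa [abs_of_pos h1t] using this
    have hvol₁ : volume (t • A₁) = ENNReal.ofReal t * volume A₁ := by
      have := Measure.addHaar_smul (volume : Measure ℝ) t A₁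
      simpa [abs_of_pos ht0] using this
    rw [← hvol₀, ← hvol₁]
    exact bm_meas (hmA₀.const_smul₀ (1 - t)) (hmA₁.const_smul₀ t)
      (hneA₀.smul_set) (hneA₁.smul_set) hsub
  -- antitone measurability
  have hanti : ∀ φ : ℝ → ℝ≥0∞,
      Measurable (fun s : ℝ => volume {x | ENNReal.ofReal s < φ x}) := by
    intro φ
    apply Antitone.measurable
    intro s s' hss'
    exact measure_mono fun x hx => lt_of_le_of_lt (ENNReal.ofReal_le_ofReal hss') hx
  calc (∫⁻ x, φ₀ x) ^ (1 - t) * (∫⁻ x, φ₁ x) ^ t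
      ≤ (ENNReal.ofReal (1 - t) * ∫⁻ x, φ₀ x) + ENNReal.ofReal t * ∫⁻ x, φ₁ x :=
        geom_le_arith ht0 ht1 _ _
    _ = ∫⁻ s in Ioo (0:ℝ) 1, (ENNReal.ofReal (1 - t) * volume {x | ENNReal.ofReal s < φ₀ x}
          + ENNReal.ofReal t * volume {x | ENNReal.ofReal s < φ₁ x}) := by
        rw [layercake hm₀ hb₀, layercake hm₁ hb₁,
          lintegral_add_left ((hanti φ₀).const_mul _),
          lintegral_const_mul _ (hanti φ₀), lintegral_const_mul _ (hanti φ₁)]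
    _ ≤ ∫⁻ s in Ioo (0:ℝ) 1, volume {x | ENNReal.ofReal s < ψ' x} := by
        refine setLIntegral_mono (hanti ψ') key
    _ = ∫⁻ x, ψ' x := (layercake hmψ' hbψ').symm
    _ ≤ ∫⁻ x, ψ x := lintegral_mono fun x => min_le_left _ _
/-- The Prékopa–Leindler property (multiplicative form) for a measure space
with a real module structure. -/
def IsPL (t : ℝ) (α : Type*) [MeasureSpace α] [AddCommMonoid α] [Module ℝ α] : Prop :=
  ∀ φ₀ φ₁ ψ : α → ℝ≥0∞, Measurable φ₀ → Measurable φ₁ → Measurable ψ →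
    (∀ x₀ x₁ : α, φ₀ x₀ ^ (1 - t) * φ₁ x₁ ^ t ≤ ψ ((1 - t) • x₀ + t • x₁)) →
    (∫⁻ x, φ₀ x) ^ (1 - t) * (∫⁻ x, φ₁ x) ^ t ≤ ∫⁻ x, ψ x

lemma pl_real {t : ℝ} (ht0 : 0 < t) (ht1 : t < 1) : IsPL t ℝ := by
  intro φ₀ φ₁ ψ hm₀ hm₁ hmψ h
  have h1t : (0:ℝ) < 1 - t := by linarith
  -- trivial cases: zero integrals
  rcases eq_or_ne (∫⁻ x, φ₀ x) 0 with h₀ | h₀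
  · rw [h₀, ENNReal.zero_rpow_of_pos h1t, zero_mul]; exact zero_le
  rcases eq_or_ne (∫⁻ x, φ₁ x) 0 with h₁ | h₁
  · rw [h₁, ENNReal.zero_rpow_of_pos ht0, mul_zero]; exact zero_le
  -- bounded case
  have bounded : ∀ n : ℕ,
      (∫⁻ x, min (φ₀ x) n) ^ (1 - t) * (∫⁻ x, min (φ₁ x) n) ^ t ≤ ∫⁻ x, ψ x := by
    intro n
    set c : ℝ≥0∞ := (n : ℝ≥0∞) with hcdef
    have hctop : c ≠ ⊤ := ENNReal.natCast_ne_top n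
    rcases eq_or_ne (∫⁻ x, min (φ₀ x) c) 0 with hz | hz
    · rw [hz, ENNReal.zero_rpow_of_pos h1t, zero_mul]; exact zero_le
    rcases eq_or_ne (∫⁻ x, min (φ₁ x) c) 0 with hz' | hz'
    · rw [hz', ENNReal.zero_rpow_of_pos ht0, mul_zero]; exact zero_le
    set M₀ : ℝ≥0∞ := ⨆ x, min (φ₀ x) c with hM₀
    set M₁ : ℝ≥0∞ := ⨆ x, min (φ₁ x) c with hM₁
    have hM₀top : M₀ ≠ ⊤ := by
      refine ne_top_of_le_ne_top hctop (iSup_le fun x => min_le_right _ _)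
    have hM₁top : M₁ ≠ ⊤ := by
      refine ne_top_of_le_ne_top hctop (iSup_le fun x => min_le_right _ _)
    have hM₀0 : M₀ ≠ 0 := by
      intro hM
      apply hz
      have : ∀ x, min (φ₀ x) c = 0 := by
        intro x
        have := le_iSup (fun x => min (φ₀ x) c) x
        rw [← hM₀, hM] at this
        simpa using this
      simp [this]
    have hM₁0 : M₁ ≠ 0 := by
      intro hM
      apply hz'
      have : ∀ x, min (φ₁ x) c = 0 := by
        intro x
        have := le_iSup (fun x => min (φ₁ x) c) x
        rw [← hM₁, hM] at this
        simpa using this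
      simp [this]
    set K : ℝ≥0∞ := M₀ ^ (1 - t) * M₁ ^ t with hK
    have hK0 : K ≠ 0 := by
      simp only [hK, mul_ne_zero_iff]
      constructor <;>
        simp [ENNReal.rpow_eq_zero_iff, hM₀0, hM₁0, hM₀top, hM₁top] <;> intros <;> linarith
    have hKtop : K ≠ ⊤ := by
      exact ENNReal.mul_ne_top
        (ENNReal.rpow_lt_top_of_nonneg h1t.le hM₀top).ne
        (ENNReal.rpow_lt_top_of_nonneg ht0.le hM₁top).ne
    -- normalized functions
    have main := pl_one_norm ht0 ht1
      (φ₀ := fun x => min (φ₀ x) c / M₀) (φ₁ := fun x => min (φ₁ x) c / M₁)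
      (ψ := fun x => ψ x / K)
      ((hm₀.min measurable_const).div measurable_const)
      ((hm₁.min measurable_const).div measurable_const)
      (hmψ.div measurable_const) ?_ ?_ ?_ ?_ ?_
    · -- conclude from main by unnormalizing
      have e₀ : ∫⁻ x, (min (φ₀ x) c) / M₀ = (∫⁻ x, min (φ₀ x) c) * M₀⁻¹ := by
        simp only [div_eq_mul_inv]
        exact lintegral_mul_const _ (hm₀.min measurable_const)
      have e₁ : ∫⁻ x, (min (φ₁ x) c) / M₁ = (∫⁻ x, min (φ₁ x) c) * M₁⁻¹ := by
        simp only [div_eq_mul_inv]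
        exact lintegral_mul_const _ (hm₁.min measurable_const)
      have eψ : ∫⁻ x, ψ x / K = (∫⁻ x, ψ x) * K⁻¹ := by
        simp only [div_eq_mul_inv]
        exact lintegral_mul_const _ hmψ
      rw [e₀, e₁, eψ] at main
      have expand : ((∫⁻ x, min (φ₀ x) c) * M₀⁻¹) ^ (1 - t) * ((∫⁻ x, min (φ₁ x) c) * M₁⁻¹) ^ t
          = ((∫⁻ x, min (φ₀ x) c) ^ (1 - t) * (∫⁻ x, min (φ₁ x) c) ^ t) * K⁻¹ := by
        rw [ENNReal.mul_rpow_of_nonneg _ _ h1t.le, ENNReal.mul_rpow_of_nonneg _ _ ht0.le,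
          ENNReal.inv_rpow, ENNReal.inv_rpow, hK,
          ENNReal.mul_inv (Or.inl ?h1) (Or.inr ?h2)]
        · ring
        case h1 => simp [ENNReal.rpow_eq_zero_iff, hM₀0, hM₀top]
        case h2 => simp [ENNReal.rpow_eq_zero_iff, hM₁0, hM₁top]
      rw [expand] at main
      have hKinv0 : K⁻¹ ≠ 0 := ENNReal.inv_ne_zero.2 hKtop
      have hKinvtop : K⁻¹ ≠ ⊤ := ENNReal.inv_ne_top.2 hK0
      exact (ENNReal.mul_le_mul_iff_left hKinv0 hKinvtop).1 main
    · intro x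
      calc min (φ₀ x) c / M₀ ≤ M₀ / M₀ :=
            ENNReal.div_le_div_right (le_iSup (fun x => min (φ₀ x) c) x) M₀
        _ = 1 := ENNReal.div_self hM₀0 hM₀top
    · intro x
      calc min (φ₁ x) c / M₁ ≤ M₁ / M₁ :=
            ENNReal.div_le_div_right (le_iSup (fun x => min (φ₁ x) c) x) M₁
        _ = 1 := ENNReal.div_self hM₁0 hM₁top
    · intro s hs
      have : s * M₀ < M₀ := by
        conv_rhs => rw [← one_mul M₀]
        exact ENNReal.mul_lt_mul_left hM₀0 hM₀top hs
      rw [hM₀] at this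
      obtain ⟨x, hx⟩ := lt_iSup_iff.1 this
      exact ⟨x, (ENNReal.lt_div_iff_mul_lt (Or.inl hM₀0) (Or.inl hM₀top)).2 hx⟩
    · intro s hs
      have : s * M₁ < M₁ := by
        conv_rhs => rw [← one_mul M₁]
        exact ENNReal.mul_lt_mul_left hM₁0 hM₁top hs
      rw [hM₁] at this
      obtain ⟨x, hx⟩ := lt_iSup_iff.1 this
      exact ⟨x, (ENNReal.lt_div_iff_mul_lt (Or.inl hM₁0) (Or.inl hM₁top)).2 hx⟩
    · -- hypothesis for normalized functions
      intro x₀ x₁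
      have hnum : min (φ₀ x₀) c ^ (1 - t) * min (φ₁ x₁) c ^ t ≤ ψ ((1 - t) • x₀ + t • x₁) :=
        le_trans (mul_le_mul' (ENNReal.rpow_le_rpow (min_le_left _ _) h1t.le)
          (ENNReal.rpow_le_rpow (min_le_left _ _) ht0.le)) (h x₀ x₁)
      calc (min (φ₀ x₀) c / M₀) ^ (1 - t) * (min (φ₁ x₁) c / M₁) ^ t
          = (min (φ₀ x₀) c ^ (1 - t) * min (φ₁ x₁) c ^ t) / K := by
            rw [ENNReal.div_rpow_of_nonneg _ _ h1t.le, ENNReal.div_rpow_of_nonneg _ _ ht0.le]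
            rw [hK, div_eq_mul_inv, div_eq_mul_inv, div_eq_mul_inv,
              ENNReal.mul_inv (Or.inl ?h1) (Or.inr ?h2)]
            · ring
            case h1 => simp [ENNReal.rpow_eq_zero_iff, hM₀0, hM₀top]
            case h2 => simp [ENNReal.rpow_eq_zero_iff, hM₁0, hM₁top]
        _ ≤ ψ ((1 - t) • x₀ + t • x₁) / K := ENNReal.div_le_div_right hnum K
  -- pass to the limit
  have hmono₀ : Monotone fun (n : ℕ) (x : ℝ) => min (φ₀ x) n := fun m n hmn x =>
    min_le_min le_rfl (by exact_mod_cast Nat.cast_le.2 hmn)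
  have hmono₁ : Monotone fun (n : ℕ) (x : ℝ) => min (φ₁ x) n := fun m n hmn x =>
    min_le_min le_rfl (by exact_mod_cast Nat.cast_le.2 hmn)
  have hsup : ∀ φ : ℝ → ℝ≥0∞, Measurable φ →
      (⨆ n : ℕ, ∫⁻ x, min (φ x) n) = ∫⁻ x, φ x := by
    intro φ hm
    rw [← lintegral_iSup (fun n => hm.min measurable_const)
      (fun m n hmn x => min_le_min le_rfl (by exact_mod_cast Nat.cast_le.2 hmn))]
    congr 1; ext x
    calc ⨆ n : ℕ, min (φ x) n = min (φ x) (⨆ n : ℕ, (n : ℝ≥0∞)) := by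
          rw [inf_iSup_eq]
      _ = φ x := by rw [ENNReal.iSup_natCast]; simp
  have tend₀ : Tendsto (fun n : ℕ => ∫⁻ x, min (φ₀ x) n) atTop (𝓝 (∫⁻ x, φ₀ x)) := by
    rw [← hsup φ₀ hm₀]
    exact tendsto_atTop_iSup fun m n hmn => lintegral_mono (hmono₀ hmn)
  have tend₁ : Tendsto (fun n : ℕ => ∫⁻ x, min (φ₁ x) n) atTop (𝓝 (∫⁻ x, φ₁ x)) := by
    rw [← hsup φ₁ hm₁]
    exact tendsto_atTop_iSup fun m n hmn => lintegral_mono (hmono₁ hmn)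
  have ha0 : (∫⁻ x, φ₀ x) ^ (1 - t) ≠ 0 := by
    simp [ENNReal.rpow_eq_zero_iff, h₀]; intro _; linarith
  have hb0 : (∫⁻ x, φ₁ x) ^ t ≠ 0 := by
    simp [ENNReal.rpow_eq_zero_iff, h₁]; intro _; linarith
  have tendmul : Tendsto
      (fun n : ℕ => (∫⁻ x, min (φ₀ x) n) ^ (1 - t) * (∫⁻ x, min (φ₁ x) n) ^ t) atTop
      (𝓝 ((∫⁻ x, φ₀ x) ^ (1 - t) * (∫⁻ x, φ₁ x) ^ t)) := by
    refine ENNReal.Tendsto.mul ?_ (Or.inl ha0) ?_ (Or.inl hb0)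
    · exact (ENNReal.continuous_rpow_const.tendsto _).comp tend₀
    · exact (ENNReal.continuous_rpow_const.tendsto _).comp tend₁
  exact le_of_tendsto tendmul (Eventually.of_forall bounded)
/-- Tensorization step: PL on `ℝ` and on `E` gives PL on `ℝ × E`. -/
lemma pl_step {t : ℝ} (ht0 : 0 < t) (ht1 : t < 1) {E : Type*} [MeasureSpace E]
    [SigmaFinite (volume : Measure E)] [AddCommMonoid E] [Module ℝ E]
    (ih : IsPL t E) : IsPL t (ℝ × E) := by
  intro φ₀ φ₁ ψ hm₀ hm₁ hmψ h
  have fub : ∀ φ : ℝ × E → ℝ≥0∞, Measurable φ →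
      ∫⁻ z, φ z = ∫⁻ s, ∫⁻ y, φ (s, y) := by
    intro φ hm
    exact lintegral_prod _ hm.aemeasurable
  set Φ₀ : ℝ → ℝ≥0∞ := fun s => ∫⁻ y, φ₀ (s, y) with hΦ₀
  set Φ₁ : ℝ → ℝ≥0∞ := fun s => ∫⁻ y, φ₁ (s, y) with hΦ₁
  set Ψ : ℝ → ℝ≥0∞ := fun s => ∫⁻ y, ψ (s, y) with hΨ
  have hmΦ₀ : Measurable Φ₀ := Measurable.lintegral_prod_right hm₀
  have hmΦ₁ : Measurable Φ₁ := Measurable.lintegral_prod_right hm₁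
  have hmΨ : Measurable Ψ := Measurable.lintegral_prod_right hmψ
  rw [fub _ hm₀, fub _ hm₁, fub _ hmψ]
  refine pl_real ht0 ht1 Φ₀ Φ₁ Ψ hmΦ₀ hmΦ₁ hmΨ ?_
  intro s₀ s₁
  refine ih (fun y => φ₀ (s₀, y)) (fun y => φ₁ (s₁, y))
    (fun y => ψ ((1 - t) • s₀ + t • s₁, y))
    (hm₀.comp measurable_prodMk_left) (hm₁.comp measurable_prodMk_left)
    (hmψ.comp measurable_prodMk_left) ?_
  intro y₀ y₁
  have heq : ((1 - t) • s₀ + t • s₁, (1 - t) • y₀ + t • y₁)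
      = (1 - t) • ((s₀, y₀) : ℝ × E) + t • (s₁, y₁) := by
    simp [Prod.smul_mk, Prod.mk_add_mk]
  show φ₀ (s₀, y₀) ^ (1 - t) * φ₁ (s₁, y₁) ^ t
      ≤ ψ ((1 - t) • s₀ + t • s₁, (1 - t) • y₀ + t • y₁)
  rw [heq]
  exact h (s₀, y₀) (s₁, y₁)

/-- Transfer PL along a measure preserving linear measurable equivalence. -/
lemma pl_transfer {t : ℝ} {α β : Type*}
    [MeasureSpace α] [AddCommMonoid α] [Module ℝ α]
    [MeasureSpace β] [AddCommMonoid β] [Module ℝ β]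
    (e : α ≃ᵐ β) (hmp : MeasurePreserving e volume volume)
    (haff : ∀ (a b : ℝ) (x y : α), e (a • x + b • y) = a • e x + b • e y)
    (hβ : IsPL t β) : IsPL t α := by
  intro φ₀ φ₁ ψ hm₀ hm₁ hmψ h
  have hsymm : MeasurePreserving e.symm volume volume := hmp.symm e
  have key : ∀ φ : α → ℝ≥0∞, Measurable φ → ∫⁻ y, φ (e.symm y) = ∫⁻ x, φ x := by
    intro φ hm
    exact hsymm.lintegral_comp hm
  rw [← key _ hm₀, ← key _ hm₁, ← key _ hmψ]
  refine hβ _ _ _ (hm₀.comp e.symm.measurable) (hm₁.comp e.symm.measurable)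
    (hmψ.comp e.symm.measurable) ?_
  intro y₀ y₁
  have : e.symm ((1 - t) • y₀ + t • y₁) = (1 - t) • e.symm y₀ + t • e.symm y₁ := by
    apply e.injective
    rw [e.apply_symm_apply, haff, e.apply_symm_apply, e.apply_symm_apply]
  show φ₀ (e.symm y₀) ^ (1 - t) * φ₁ (e.symm y₁) ^ t ≤ ψ (e.symm ((1 - t) • y₀ + t • y₁))
  rw [this]
  exact h (e.symm y₀) (e.symm y₁)

lemma pl_pi {t : ℝ} (ht0 : 0 < t) (ht1 : t < 1) : ∀ n : ℕ, IsPL t (Fin n → ℝ) := by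
  intro n
  induction n with
  | zero =>
    intro φ₀ φ₁ ψ _ _ _ h
    have huniv : (volume : Measure (Fin 0 → ℝ)) univ = 1 := by
      rw [volume_pi, Measure.pi_univ]; simp
    rw [lintegral_unique, lintegral_unique, lintegral_unique, huniv, mul_one, mul_one, mul_one]
    have key : ∀ x : Fin 0 → ℝ, φ₀ x ^ (1 - t) * φ₁ x ^ t ≤ ψ x := by
      intro x
      calc φ₀ x ^ (1 - t) * φ₁ x ^ t ≤ ψ ((1 - t) • x + t • x) := h x x
        _ = ψ x := by rw [Subsingleton.elim ((1 - t) • x + t • x) x]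
    exact key _
  | succ n ihn =>
    have hstep : IsPL t (ℝ × (Fin n → ℝ)) := pl_step ht0 ht1 ihn
    refine pl_transfer (MeasurableEquiv.piFinSuccAbove (fun _ => ℝ) 0) ?_ ?_ hstep
    · have := measurePreserving_piFinSuccAbove (fun _ : Fin (n + 1) => (volume : Measure ℝ)) 0
      have hv : (volume : Measure (ℝ × (Fin n → ℝ))) = (volume : Measure ℝ).prod volume := rfl
      rw [hv, volume_pi]
      convert this using 2 <;> rfl
    · intro a b x y; rfl

lemma pl_euclidean {t : ℝ} (ht0 : 0 < t) (ht1 : t < 1) (n : ℕ) :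
    IsPL t (EuclideanSpace ℝ (Fin n)) := by
  refine pl_transfer (MeasurableEquiv.toLp 2 (Fin n → ℝ)).symm ?_ ?_ (pl_pi ht0 ht1 n)
  · exact EuclideanSpace.volume_preserving_symm_measurableEquiv_toLp (Fin n)
  · intro a b x y; rfl
lemma measurable_expNeg : Measurable expNeg := by
  unfold expNeg
  refine Measurable.ite (measurableSet_eq) measurable_const ?_
  exact ENNReal.measurable_ofReal.comp
    (Real.continuous_exp.measurable.comp measurable_ereal_toReal.neg)

lemma expNeg_ne_top (y : EReal) : expNeg y ≠ ⊤ := by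
  unfold expNeg
  split <;> simp

lemma expNeg_anti {x y : EReal} (hx : x ≠ ⊥) (h : x ≤ y) : expNeg y ≤ expNeg x := by
  unfold expNeg
  rcases eq_or_ne y ⊤ with rfl | hy
  · simp
  have hxt : x ≠ ⊤ := fun hxt => hy (top_le_iff.1 (hxt ▸ h))
  rw [if_neg hy, if_neg hxt]
  apply ENNReal.ofReal_le_ofReal
  apply Real.exp_le_exp.2
  exact neg_le_neg (EReal.toReal_le_toReal h hx hy)

lemma expNeg_coe (r : ℝ) : expNeg (r : EReal) = ENNReal.ofReal (Real.exp (-r)) := by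
  unfold expNeg
  rw [if_neg (EReal.coe_ne_top r), EReal.toReal_coe]

lemma expNeg_combo {t : ℝ} (ht0 : 0 < t) (ht1 : t < 1) {a b : EReal}
    (ha : a ≠ ⊥) (hb : b ≠ ⊥) :
    expNeg (((1 - t : ℝ) : EReal) * a + (t : EReal) * b)
      = expNeg a ^ (1 - t) * expNeg b ^ t := by
  have h1t : (0:ℝ) < 1 - t := by linarith
  rcases eq_or_ne a ⊤ with rfl | hatop
  · have h1 : ((1 - t : ℝ) : EReal) * ⊤ = ⊤ := EReal.coe_mul_top_of_pos h1t
    have h2 : ((t : ℝ) : EReal) * b ≠ ⊥ := by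
      induction b with
      | bot => exact absurd rfl hb
      | coe r => rw [← EReal.coe_mul]; exact EReal.coe_ne_bot _
      | top => rw [EReal.coe_mul_top_of_pos ht0]; exact top_ne_bot
    rw [h1, EReal.top_add_of_ne_bot h2]
    have : expNeg ⊤ = 0 := by unfold expNeg; simp
    rw [this, ENNReal.zero_rpow_of_pos h1t, zero_mul]
  rcases eq_or_ne b ⊤ with rfl | hbtop
  · have h1 : ((t : ℝ) : EReal) * ⊤ = ⊤ := EReal.coe_mul_top_of_pos ht0
    have h2 : ((1 - t : ℝ) : EReal) * a ≠ ⊥ := by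
      induction a with
      | bot => exact absurd rfl ha
      | coe r => rw [← EReal.coe_mul]; exact EReal.coe_ne_bot _
      | top => rw [EReal.coe_mul_top_of_pos h1t]; exact top_ne_bot
    rw [h1, EReal.add_top_of_ne_bot h2]
    have : expNeg ⊤ = 0 := by unfold expNeg; simp
    rw [this, ENNReal.zero_rpow_of_pos ht0, mul_zero]
  -- both finite
  lift a to ℝ using ⟨hatop, ha⟩
  lift b to ℝ using ⟨hbtop, hb⟩
  rw [← EReal.coe_mul, ← EReal.coe_mul, ← EReal.coe_add, expNeg_coe, expNeg_coe, expNeg_coe]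
  rw [ENNReal.ofReal_rpow_of_pos (Real.exp_pos _), ENNReal.ofReal_rpow_of_pos (Real.exp_pos _),
    ← ENNReal.ofReal_mul (by positivity)]
  congr 1
  rw [← Real.exp_mul, ← Real.exp_mul, ← Real.exp_add]
  ring_nf

end PL

/-- Prékopa–Leindler inequality. -/
theorem prekopa_leindler (n : ℕ) (t : ℝ) (ht0 : 0 ≤ t) (ht1 : t ≤ 1)
    (f₀ f₁ g : EuclideanSpace ℝ (Fin n) → EReal)
    (hf₀ : Measurable f₀) (hf₁ : Measurable f₁) (hg : Measurable g)
    (hf₀' : ∀ x, f₀ x ≠ ⊥) (hf₁' : ∀ x, f₁ x ≠ ⊥) (hg' : ∀ x, g x ≠ ⊥)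
    (h : ∀ x₀ x₁ : EuclideanSpace ℝ (Fin n),
      g ((1 - t) • x₀ + t • x₁) ≤ ((1 - t : ℝ) : EReal) * f₀ x₀ + (t : EReal) * f₁ x₁) :
    (∫⁻ x, expNeg (f₀ x)) ^ (1 - t) * (∫⁻ x, expNeg (f₁ x)) ^ t
      ≤ ∫⁻ x, expNeg (g x) := by
  rcases eq_or_lt_of_le ht0 with rfl | ht0'
  · -- t = 0
    simp only [sub_zero, ENNReal.rpow_one, ENNReal.rpow_zero, mul_one]
    apply lintegral_mono
    intro x
    apply PL.expNeg_anti (hg' x)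
    have := h x x
    simpa using this
  rcases eq_or_lt_of_le ht1 with rfl | ht1'
  · -- t = 1
    simp only [sub_self, ENNReal.rpow_one, ENNReal.rpow_zero, one_mul]
    apply lintegral_mono
    intro x
    apply PL.expNeg_anti (hg' x)
    have := h x x
    simpa using this
  -- 0 < t < 1
  refine PL.pl_euclidean ht0' ht1' n (fun x => expNeg (f₀ x)) (fun x => expNeg (f₁ x))
    (fun x => expNeg (g x)) (PL.measurable_expNeg.comp hf₀) (PL.measurable_expNeg.comp hf₁)
    (PL.measurable_expNeg.comp hg) ?_
  intro x₀ x₁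
  rw [← PL.expNeg_combo ht0' ht1' (hf₀' x₀) (hf₁' x₁)]
  apply PL.expNeg_anti ?_ (h x₀ x₁)
  exact hg' _
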